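/- Let Γ be a graph, G a weighted graph on V(Γ) with edge weights d_Γ (each weight ≥ 1), and t ≥ 1. Let S be a minimal set of added edges making G+S have dilation at most t. Then for every endpoint a of an edge of S there is a vertex w in adjacent conflict in G with hop_G(w,a) ≤ t², i.e., V_S ⊆ N_G^{t²}(V_c). -/

import Mathlib

open SimpleGraph

/-- The weight of a walk in `G`, where each edge `uv` is weighted by the
shortest-path distance `Γ.dist u v` in the (unweighted) graph `Γ`. -/
noncomputable def walkWeight {V : Type*} (Γ G : SimpleGraph V) :
    {x y : V} → G.Walk x y → ℕ
  | x, _, .cons (v := v) _ p => Γ.dist x v + walkWeight Γ G p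
  | _, _, .nil => 0

/-- Weighted shortest-path distance in `G`, with edge weights `Γ.dist`;
`⊤` if there is no walk. -/
noncomputable def wdist {V : Type*} (Γ G : SimpleGraph V) (x y : V) : ℕ∞ :=
  ⨅ p : G.Walk x y, (walkWeight Γ G p : ℕ∞)

section Helpers
variable {V : Type*} {Γ G H : SimpleGraph V}

@[simp] lemma walkWeight_nil {x : V} : walkWeight Γ G (.nil : G.Walk x x) = 0 := rfl

@[simp] lemma walkWeight_cons {x v y : V} (h : G.Adj x v) (p : G.Walk v y) :
    walkWeight Γ G (.cons h p) = Γ.dist x v + walkWeight Γ G p := rfl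

lemma walkWeight_append {x y z : V} (p : G.Walk x y) (q : G.Walk y z) :
    walkWeight Γ G (p.append q) = walkWeight Γ G p + walkWeight Γ G q := by
  induction p with
  | nil => simp
  | cons h p ih => simp [ih]; ring

lemma walkWeight_transfer {x y : V} (p : G.Walk x y) (hp : ∀ e ∈ p.edges, e ∈ H.edgeSet) :
    walkWeight Γ H (p.transfer H hp) = walkWeight Γ G p := by
  induction p with
  | nil => simp
  | cons h p ih => simp [Walk.transfer, ih]; exact (walkWeight_cons _ _).trans (congrArg _ (ih _))

lemma wdist_le {x y : V} (p : G.Walk x y) :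
    wdist Γ G x y ≤ (walkWeight Γ G p : ℕ∞) := iInf_le _ p

@[simp] lemma wdist_self (x : V) : wdist Γ G x x = 0 :=
  le_antisymm (by simpa using wdist_le (Γ := Γ) (.nil : G.Walk x x)) zero_le

lemma wdist_exists_walk {x y : V} (h : Nonempty (G.Walk x y)) :
    ∃ p : G.Walk x y, (walkWeight Γ G p : ℕ∞) = wdist Γ G x y := by
  obtain ⟨p₀⟩ := h
  have hne : wdist Γ G x y ≠ ⊤ :=
    fun h => by simpa [h] using wdist_le (Γ := Γ) p₀
  obtain ⟨n, hn⟩ : ∃ n : ℕ, wdist Γ G x y = (n : ℕ∞) := ⟨_, (ENat.coe_toNat hne).symm⟩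
  have : wdist Γ G x y < (n : ℕ∞) + 1 := by rw [hn]; exact ENat.lt_add_one_iff (by simp) |>.mpr le_rfl
  rw [wdist, iInf_lt_iff] at this
  obtain ⟨p, hp⟩ := this
  refine ⟨p, le_antisymm ?_ (wdist_le p)⟩
  rw [hn]
  exact_mod_cast ENat.lt_add_one_iff (by simp) |>.mp hp

lemma nonempty_walk_of_wdist_ne_top {x y : V} (h : wdist Γ G x y ≠ ⊤) :
    Nonempty (G.Walk x y) := by
  by_contra hc
  rw [not_nonempty_iff] at hc
  exact h (by simp [wdist, iInf_of_empty])

lemma wdist_triangle (x y z : V) :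
    wdist Γ G x z ≤ wdist Γ G x y + wdist Γ G y z := by
  by_cases h1 : wdist Γ G x y = ⊤
  · simp [h1]
  by_cases h2 : wdist Γ G y z = ⊤
  · simp [h2]
  obtain ⟨p, hp⟩ := wdist_exists_walk (Γ := Γ) (nonempty_walk_of_wdist_ne_top (Γ := Γ) h1)
  obtain ⟨q, hq⟩ := wdist_exists_walk (Γ := Γ) (nonempty_walk_of_wdist_ne_top (Γ := Γ) h2)
  calc wdist Γ G x z ≤ (walkWeight Γ G (p.append q) : ℕ∞) := wdist_le _
    _ = (walkWeight Γ G p : ℕ∞) + walkWeight Γ G q := by rw [walkWeight_append]; push_cast; ring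
    _ = _ := by rw [hp, hq]

lemma wdist_mono (hGH : G ≤ H) (x y : V) : wdist Γ H x y ≤ wdist Γ G x y := by
  refine le_iInf fun p => ?_
  have hsub : ∀ e ∈ p.edges, e ∈ H.edgeSet := fun e he =>
    SimpleGraph.edgeSet_mono hGH (p.edges_subset_edgeSet he)
  calc wdist Γ H x y ≤ (walkWeight Γ H (p.transfer H hsub) : ℕ∞) := wdist_le _
    _ = _ := by rw [walkWeight_transfer]

lemma walkWeight_reverse {x y : V} (p : G.Walk x y) :
    walkWeight Γ G p.reverse = walkWeight Γ G p := by
  induction p with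
  | nil => simp
  | cons h p ih => rw [Walk.reverse_cons, walkWeight_append, ih]; simp [Γ.dist_comm, Nat.add_comm]

lemma wdist_comm (x y : V) : wdist Γ G x y = wdist Γ G y x := by
  have : ∀ u v : V, wdist Γ G u v ≤ wdist Γ G v u := fun u v => le_iInf fun p =>
    calc wdist Γ G u v ≤ (walkWeight Γ G p.reverse : ℕ∞) := wdist_le _
      _ = _ := by rw [walkWeight_reverse]
  exact le_antisymm (this x y) (this y x)

/-- Triangle inequality in Γ: the Γ-distance between endpoints bounds below the weight. -/
lemma dist_le_walkWeight (hΓ : Γ.Connected) : ∀ {x y : V} (p : G.Walk x y),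
    Γ.dist x y ≤ walkWeight Γ G p := by
  intro x y p
  induction p with
  | nil => simp
  | cons h p ih =>
    rename_i u v w
    calc Γ.dist u w ≤ Γ.dist u v + Γ.dist v w := hΓ.dist_triangle
      _ ≤ Γ.dist u v + walkWeight Γ G p := by omega
      _ = _ := by simp

/-- Since all weights are ≥ 1, hop length is at most the weight. -/
lemma length_le_walkWeight (hΓ : Γ.Connected) : ∀ {x y : V} (p : G.Walk x y),
    p.length ≤ walkWeight Γ G p := by
  intro x y p
  induction p with
  | nil => simp
  | cons h p ih =>
    have h1 : 1 ≤ Γ.dist _ _ := hΓ.pos_dist_of_ne h.ne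
    simp only [Walk.length_cons, walkWeight_cons]
    omega

/-- If all Γ-adjacent pairs have wdist ≤ t, then dilation holds everywhere. -/
lemma wdist_le_of_adj_le (hΓ : Γ.Connected) (t : ℕ)
    (hadj : ∀ x y : V, Γ.Adj x y → wdist Γ G x y ≤ (t : ℕ∞)) (u v : V) :
    wdist Γ G u v ≤ (t : ℕ∞) * (Γ.dist u v : ℕ∞) := by
  obtain ⟨p, hp⟩ := hΓ.exists_walk_length_eq_dist u v
  rw [← hp]
  clear hp
  induction p with
  | nil => simp
  | cons h p ih =>
    rename_i x z y
    calc wdist Γ G x y ≤ wdist Γ G x z + wdist Γ G z y := wdist_triangle _ _ _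
      _ ≤ (t : ℕ∞) + (t : ℕ∞) * (p.length : ℕ∞) := add_le_add (hadj _ _ h) ih
      _ = (t : ℕ∞) * (((Walk.cons h p).length : ℕ) : ℕ∞) := by
          simp only [Walk.length_cons]; push_cast; ring

/-- Walking along a Γ-walk towards `a`: either we find a conflict vertex within
weighted distance `t * length` of `a`, or the start is within `t * length`. -/
lemma find_conflict (t : ℕ) : ∀ {x a : V} (q : Γ.Walk x a),
    (∃ w : V, (∃ y : V, Γ.Adj w y ∧ (t : ℕ∞) < wdist Γ G w y) ∧
        wdist Γ G w a ≤ (t : ℕ∞) * (q.length : ℕ∞))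
    ∨ wdist Γ G x a ≤ (t : ℕ∞) * (q.length : ℕ∞) := by
  intro x a q
  induction q with
  | nil => right; simp
  | cons h q ih =>
    rename_i x v a'
    have hlen : (t : ℕ∞) * (q.length : ℕ∞) ≤ (t : ℕ∞) * (((Walk.cons h q).length : ℕ) : ℕ∞) := by
      gcongr <;> simp
    rcases ih with ⟨w, hw, hwd⟩ | hvd
    · exact Or.inl ⟨w, hw, hwd.trans hlen⟩
    by_cases hc : (t : ℕ∞) < wdist Γ G x v
    · exact Or.inl ⟨v, ⟨x, h.symm, by rwa [wdist_comm]⟩, hvd.trans hlen⟩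
    · right
      push_neg at hc
      calc wdist Γ G x a' ≤ wdist Γ G x v + wdist Γ G v a' := wdist_triangle _ _ _
        _ ≤ (t : ℕ∞) + (t : ℕ∞) * (q.length : ℕ∞) := add_le_add hc hvd
        _ = (t : ℕ∞) * (((Walk.cons h q).length : ℕ) : ℕ∞) := by
            simp only [Walk.length_cons]; push_cast; ring

lemma finishing (hΓ : Γ.Connected) {w a : V} {t : ℕ}
    (h : wdist Γ G w a ≤ ((t * t : ℕ) : ℕ∞)) :
    G.Reachable w a ∧ G.dist w a ≤ t ^ 2 := by
  have hne : wdist Γ G w a ≠ ⊤ := (h.trans_lt (ENat.coe_lt_top _)).ne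
  obtain ⟨p, hp⟩ := wdist_exists_walk (Γ := Γ) (nonempty_walk_of_wdist_ne_top (Γ := Γ) hne)
  have hw : walkWeight Γ G p ≤ t * t := by
    have h' := h
    rw [← hp] at h'
    exact_mod_cast h'
  refine ⟨⟨p⟩, ?_⟩
  have h1 := length_le_walkWeight (G := G) hΓ p
  have h2 := G.dist_le p
  rw [pow_two]
  omega

end Helpers

/-- Endpoints of a minimal dilation `t`-augmentation set lie within hop-distance `t²`
in `G` of some vertex in adjacent conflict: `V_S ⊆ N_G^{t²}(V_c)`. -/
theorem endpoints_near_conflicts_hop {V : Type*} [Fintype V]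
    (Γ G S : SimpleGraph V) (hconn : Γ.Connected) (t : ℕ) (ht : 1 ≤ t)
    (hnonedge : ∀ x y : V, S.Adj x y → ¬ G.Adj x y)
    (hdil : ∀ u v : V, wdist Γ (G ⊔ S) u v ≤ (t : ℕ∞) * (Γ.dist u v : ℕ∞))
    (hmin : ∀ S' : SimpleGraph V, S' < S →
      ¬ (∀ u v : V, wdist Γ (G ⊔ S') u v ≤ (t : ℕ∞) * (Γ.dist u v : ℕ∞))) :
    ∀ a : V, (∃ b, S.Adj a b) →
      ∃ w : V, (∃ y : V, Γ.Adj w y ∧ (t : ℕ∞) < wdist Γ G w y) ∧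
        G.Reachable w a ∧ G.dist w a ≤ t ^ 2 := by
  rintro a ⟨b, hab⟩
  classical
  set S' := S.deleteEdges {s(a, b)} with hS'def
  have hS'lt : S' < S := by
    refine lt_of_le_of_ne (S.deleteEdges_le _) fun h => ?_
    have : S'.Adj a b := h ▸ hab
    simp [hS'def] at this
  -- an adjacent pair in conflict for G ⊔ S'
  obtain ⟨s₁, s₂, hs12, hconf'⟩ :
      ∃ s₁ s₂ : V, Γ.Adj s₁ s₂ ∧ (t : ℕ∞) < wdist Γ (G ⊔ S') s₁ s₂ := by
    by_contra hc
    push_neg at hc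
    exact hmin S' hS'lt (wdist_le_of_adj_le hconn t hc)
  have hconfG : (t : ℕ∞) < wdist Γ G s₁ s₂ :=
    hconf'.trans_le (wdist_mono le_sup_left s₁ s₂)
  -- a short walk in G ⊔ S between s₁ and s₂
  have hts : wdist Γ (G ⊔ S) s₁ s₂ ≤ (t : ℕ∞) := by
    have h := hdil s₁ s₂
    rw [dist_eq_one_iff_adj.mpr hs12] at h
    simpa using h
  have hne : wdist Γ (G ⊔ S) s₁ s₂ ≠ ⊤ := (hts.trans_lt (ENat.coe_lt_top _)).ne
  obtain ⟨p, hp⟩ := wdist_exists_walk (Γ := Γ) (nonempty_walk_of_wdist_ne_top (Γ := Γ) hne)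
  have hpw : walkWeight Γ (G ⊔ S) p ≤ t := by
    have := hp ▸ hts
    exact_mod_cast this
  -- p must use the edge s(a,b)
  have hedge : s(a, b) ∈ p.edges := by
    by_contra hcc
    have hsub : ∀ e ∈ p.edges, e ∈ (G ⊔ S').edgeSet := by
      intro e he
      have h0 := p.edges_subset_edgeSet he
      rw [edgeSet_sup] at h0 ⊢
      rcases h0 with h0 | h0
      · exact Or.inl h0
      · refine Or.inr ?_
        rw [hS'def, edgeSet_deleteEdges]
        exact ⟨h0, fun h' => hcc ((Set.mem_singleton_iff.mp h') ▸ he)⟩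
    have hle : wdist Γ (G ⊔ S') s₁ s₂ ≤ (t : ℕ∞) :=
      (wdist_le (p.transfer _ hsub)).trans
        (by rw [walkWeight_transfer]; exact_mod_cast hpw)
    exact absurd hle (not_le.mpr hconf')
  have haS : a ∈ p.support := p.fst_mem_support_of_mem_edges hedge
  -- the prefix of p up to a has small weight, so Γ.dist s₁ a ≤ t
  have hpre : Γ.dist s₁ a ≤ t := by
    have h1 : Γ.dist s₁ a ≤ walkWeight Γ (G ⊔ S) (p.takeUntil a haS) :=
      dist_le_walkWeight hconn _
    have h2 : walkWeight Γ (G ⊔ S) (p.takeUntil a haS) ≤ walkWeight Γ (G ⊔ S) p := by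
      conv_rhs => rw [← p.take_spec haS]
      rw [walkWeight_append]
      omega
    omega
  obtain ⟨q, hq⟩ := hconn.exists_walk_length_eq_dist s₁ a
  have hqlen : q.length ≤ t := hq ▸ hpre
  have hmul : (t : ℕ∞) * (q.length : ℕ∞) ≤ ((t * t : ℕ) : ℕ∞) := by
    push_cast
    exact mul_le_mul_right (by exact_mod_cast hqlen) _
  rcases find_conflict (Γ := Γ) (G := G) t q with ⟨w, hw, hwd⟩ | hsd
  · exact ⟨w, hw, finishing hconn (hwd.trans hmul)⟩
  · exact ⟨s₁, ⟨s₂, hs12, hconfG⟩, finishing hconn (hsd.trans hmul)⟩
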